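/- Let p be prime and let f ∈ F_p[X] be a monic polynomial with f(0) ≠ 0. The linearized polynomial L_f (obtained by replacing X^i with X^{p^i} in f) splits completely over F_{p^n} if and only if f divides X^n - 1 in F_p[X]. -/

import Mathlib

open Polynomial Module LinearMap

noncomputable def frobLin (p n : ℕ) [Fact p.Prime] :
    GaloisField p n →ₗ[ZMod p] GaloisField p n where
  toFun x := x ^ p
  map_add' x y := add_pow_char x y p
  map_smul' c x := by
    simp only [RingHom.id_apply, _root_.smul_pow, ZMod.pow_card]

lemma frobLin_pow (p n : ℕ) [Fact p.Prime] (i : ℕ) (x : GaloisField p n) :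
    ((frobLin p n) ^ i) x = x ^ p ^ i := by
  induction i generalizing x with
  | zero => simp
  | succ i ih =>
      rw [pow_succ, Module.End.mul_apply]
      show ((frobLin p n) ^ i) (x ^ p) = _
      rw [ih, ← pow_mul, ← pow_succ']

lemma eval_L_eq (p n : ℕ) [Fact p.Prime] (f : Polynomial (ZMod p)) (x : GaloisField p n) :
    Polynomial.eval x (∑ i ∈ Finset.range (f.natDegree + 1),
        Polynomial.C (algebraMap (ZMod p) (GaloisField p n) (f.coeff i)) *
          Polynomial.X ^ (p ^ i)) = Polynomial.aeval (frobLin p n) f x := by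
  rw [Polynomial.aeval_eq_sum_range, LinearMap.sum_apply, Polynomial.eval_finset_sum]
  refine Finset.sum_congr rfl fun i _ => ?_
  rw [LinearMap.smul_apply, frobLin_pow, Algebra.smul_def]
  simp

lemma ncard_ker (p n : ℕ) [Fact p.Prime]
    (T : GaloisField p n →ₗ[ZMod p] GaloisField p n) :
    ((LinearMap.ker T : Set (GaloisField p n))).ncard
      = p ^ Module.finrank (ZMod p) (LinearMap.ker T) := by
  classical
  haveI : Fintype (GaloisField p n) := Fintype.ofFinite _
  have h := card_eq_pow_finrank (K := ZMod p) (V := LinearMap.ker T)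
  rw [ZMod.card] at h
  rw [Set.ncard_eq_toFinset_card', ← h, Set.toFinset_card]
  exact Fintype.card_congr (Equiv.refl _)

lemma coeff_L (p n : ℕ) [Fact p.Prime] (g : Polynomial (ZMod p)) :
    (∑ i ∈ Finset.range (g.natDegree + 1),
        Polynomial.C (algebraMap (ZMod p) (GaloisField p n) (g.coeff i)) *
          Polynomial.X ^ (p ^ i)).coeff (p ^ g.natDegree)
      = algebraMap (ZMod p) (GaloisField p n) (g.coeff g.natDegree) := by
  rw [Polynomial.finset_sum_coeff, Finset.sum_eq_single g.natDegree]
  · simp [Polynomial.coeff_C_mul, Polynomial.coeff_X_pow]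
  · intro i _ hne
    have hpi : p ^ g.natDegree ≠ p ^ i := fun h =>
      hne (Nat.pow_right_injective (Fact.out (p := p.Prime)).two_le h).symm
    simp [Polynomial.coeff_C_mul, Polynomial.coeff_X_pow, hpi]
  · intro h; exact absurd (Finset.self_mem_range_succ _) h

lemma ncard_rootset_le (p n : ℕ) [Fact p.Prime] (g : Polynomial (ZMod p)) (hg : g ≠ 0) :
    ({x : GaloisField p n | Polynomial.eval x (∑ i ∈ Finset.range (g.natDegree + 1),
        Polynomial.C (algebraMap (ZMod p) (GaloisField p n) (g.coeff i)) *
          Polynomial.X ^ (p ^ i)) = 0}).ncard ≤ p ^ g.natDegree := by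
  classical
  set P : Polynomial (GaloisField p n) := ∑ i ∈ Finset.range (g.natDegree + 1),
      Polynomial.C (algebraMap (ZMod p) (GaloisField p n) (g.coeff i)) *
        Polynomial.X ^ (p ^ i) with hP
  have hc : P.coeff (p ^ g.natDegree) = algebraMap (ZMod p) (GaloisField p n) (g.coeff g.natDegree) :=
    coeff_L p n g
  have hPne : P ≠ 0 := by
    intro h
    rw [h, Polynomial.coeff_zero] at hc
    have hlc : g.coeff g.natDegree ≠ 0 := fun h => hg (Polynomial.leadingCoeff_eq_zero.mp h)
    exact hlc ((_root_.map_eq_zero _).mp hc.symm)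
  have hdeg : P.natDegree ≤ p ^ g.natDegree := by
    refine Polynomial.natDegree_sum_le_of_forall_le _ _ fun i hi => ?_
    refine (Polynomial.natDegree_C_mul_le _ _).trans ?_
    rw [Polynomial.natDegree_X_pow]
    exact Nat.pow_le_pow_right (Fact.out (p := p.Prime)).pos (Nat.lt_succ_iff.mp (Finset.mem_range.mp hi))
  have hsub : {x : GaloisField p n | Polynomial.eval x P = 0} ⊆ ↑P.roots.toFinset := by
    intro x hx
    rw [Finset.mem_coe, Multiset.mem_toFinset, Polynomial.mem_roots hPne]
    exact hx
  calc ({x : GaloisField p n | Polynomial.eval x P = 0}).ncard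
      ≤ (↑P.roots.toFinset : Set (GaloisField p n)).ncard :=
        Set.ncard_le_ncard hsub (P.roots.toFinset).finite_toSet
    _ = P.roots.toFinset.card := Set.ncard_coe_finset _
    _ ≤ Multiset.card P.roots := Multiset.toFinset_card_le _
    _ ≤ P.natDegree := Polynomial.card_roots' P
    _ ≤ p ^ g.natDegree := hdeg

lemma aeval_Xn_sub_one (p n : ℕ) [Fact p.Prime] (hn : 0 < n) :
    Polynomial.aeval (frobLin p n) ((Polynomial.X : Polynomial (ZMod p)) ^ n - 1) = 0 := by
  ext x
  simp only [map_sub, map_pow, map_one, Polynomial.aeval_X, LinearMap.sub_apply,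
    LinearMap.zero_apply]
  rw [Module.End.one_apply, frobLin_pow, sub_eq_zero]
  haveI : Fintype (GaloisField p n) := Fintype.ofFinite _
  have hcard := GaloisField.card p n hn.ne'
  rw [Nat.card_eq_fintype_card] at hcard
  rw [← hcard]
  exact FiniteField.pow_card x

theorem stmt_1 (p n : ℕ) [Fact p.Prime] (hn : 0 < n)
    (f : Polynomial (ZMod p)) (hf : f.Monic) (h0 : f.coeff 0 ≠ 0) :
    ({x : GaloisField p n |
        Polynomial.eval x (∑ i ∈ Finset.range (f.natDegree + 1),
          Polynomial.C (algebraMap (ZMod p) (GaloisField p n) (f.coeff i)) *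
            Polynomial.X ^ (p ^ i)) = 0}.ncard = p ^ f.natDegree)
      ↔ f ∣ Polynomial.X ^ n - 1 := by
  classical
  have hp2 : 2 ≤ p := (Fact.out (p := p.Prime)).two_le
  have hfne : f ≠ 0 := hf.ne_zero
  set φ := frobLin p n with hφ
  have hset : ∀ g : Polynomial (ZMod p),
      {x : GaloisField p n | Polynomial.eval x (∑ i ∈ Finset.range (g.natDegree + 1),
        Polynomial.C (algebraMap (ZMod p) (GaloisField p n) (g.coeff i)) *
          Polynomial.X ^ (p ^ i)) = 0}
      = ↑(LinearMap.ker (Polynomial.aeval φ g)) := by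
    intro g; ext x
    simp only [Set.mem_setOf_eq, SetLike.mem_coe, LinearMap.mem_ker, eval_L_eq, hφ]
  have hXn0 : Polynomial.aeval φ ((Polynomial.X : Polynomial (ZMod p)) ^ n - 1) = 0 :=
    aeval_Xn_sub_one p n hn
  constructor
  · intro h
    set g := EuclideanDomain.gcd f (Polynomial.X ^ n - 1) with hg
    have hgne : g ≠ 0 := fun h0' => hfne (EuclideanDomain.gcd_eq_zero_iff.mp h0').1
    have hsub : {x : GaloisField p n | Polynomial.eval x (∑ i ∈ Finset.range (f.natDegree + 1),
        Polynomial.C (algebraMap (ZMod p) (GaloisField p n) (f.coeff i)) *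
          Polynomial.X ^ (p ^ i)) = 0}
        ⊆ {x : GaloisField p n | Polynomial.eval x (∑ i ∈ Finset.range (g.natDegree + 1),
        Polynomial.C (algebraMap (ZMod p) (GaloisField p n) (g.coeff i)) *
          Polynomial.X ^ (p ^ i)) = 0} := by
      rw [hset f, hset g]
      intro x hx
      simp only [SetLike.mem_coe, LinearMap.mem_ker] at hx ⊢
      have hab := EuclideanDomain.gcd_eq_gcd_ab f (Polynomial.X ^ n - 1)
      rw [← hg] at hab
      rw [hab, mul_comm f, mul_comm ((Polynomial.X : Polynomial (ZMod p)) ^ n - 1),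
        map_add, map_mul, map_mul, hXn0, mul_zero, add_zero, Module.End.mul_apply, hx,
        map_zero]
    have hle : p ^ f.natDegree ≤ p ^ g.natDegree := by
      rw [← h]
      exact (Set.ncard_le_ncard hsub (Set.toFinite _)).trans (ncard_rootset_le p n g hgne)
    have hdg : g.natDegree = f.natDegree :=
      le_antisymm (Polynomial.natDegree_le_of_dvd (EuclideanDomain.gcd_dvd_left f _) hfne)
        ((Nat.pow_le_pow_iff_right hp2).mp hle)
    obtain ⟨q, hq⟩ := EuclideanDomain.gcd_dvd_left f (Polynomial.X ^ n - 1)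
    rw [← hg] at hq
    have hqne : q ≠ 0 := fun h' => hfne (by rw [hq, h', mul_zero])
    have hdq : q.natDegree = 0 := by
      have h1 := Polynomial.natDegree_mul hgne hqne
      rw [← hq, hdg] at h1; omega
    obtain ⟨c, hcq⟩ : ∃ c, q = Polynomial.C c :=
      ⟨q.coeff 0, Polynomial.eq_C_of_natDegree_eq_zero hdq⟩
    have hc0 : c ≠ 0 := fun h' => hqne (by rw [hcq, h', map_zero])
    have hfdg : f ∣ g := ⟨Polynomial.C c⁻¹, by
      rw [hq, hcq, mul_assoc, ← Polynomial.C_mul, mul_inv_cancel₀ hc0, Polynomial.C_1,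
        mul_one]⟩
    exact hfdg.trans (EuclideanDomain.gcd_dvd_right f _)
  · rintro ⟨g, hfg⟩
    have hXne : (Polynomial.X ^ n - 1 : Polynomial (ZMod p)) ≠ 0 := by
      intro h'
      have h2 : (Polynomial.X ^ n - 1 : Polynomial (ZMod p)).natDegree = n := by
        rw [← Polynomial.C_1, Polynomial.natDegree_X_pow_sub_C]
      rw [h'] at h2
      simp at h2
      omega
    have hgne : g ≠ 0 := fun h' => hXne (by rw [hfg, h', mul_zero])
    have hdeg : f.natDegree + g.natDegree = n := by
      have h1 := Polynomial.natDegree_mul hfne hgne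
      rw [← hfg] at h1
      have h2 : (Polynomial.X ^ n - 1 : Polynomial (ZMod p)).natDegree = n := by
        rw [← Polynomial.C_1, Polynomial.natDegree_X_pow_sub_C]
      omega
    set M := Polynomial.aeval φ f with hM
    set N := Polynomial.aeval φ g with hN
    have hMN : M.comp N = 0 := by
      rw [← Module.End.mul_eq_comp, ← map_mul, ← hfg, hXn0]
    have hrange : LinearMap.range N ≤ LinearMap.ker M := LinearMap.range_le_ker_iff.mpr hMN
    have hK : Module.finrank (ZMod p) (GaloisField p n) = n := GaloisField.finrank p hn.ne'
    have haM : Module.finrank (ZMod p) (LinearMap.ker M) ≤ f.natDegree := by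
      have h2 := ncard_rootset_le p n f hfne
      rw [hset f, ncard_ker p n M] at h2
      exact (Nat.pow_le_pow_iff_right hp2).mp h2
    have haN : Module.finrank (ZMod p) (LinearMap.ker N) ≤ g.natDegree := by
      have h2 := ncard_rootset_le p n g hgne
      rw [hset g, ncard_ker p n N] at h2
      exact (Nat.pow_le_pow_iff_right hp2).mp h2
    have hrn := LinearMap.finrank_range_add_finrank_ker N
    rw [hK] at hrn
    have hrle : Module.finrank (ZMod p) (LinearMap.range N)
        ≤ Module.finrank (ZMod p) (LinearMap.ker M) := Submodule.finrank_mono hrange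
    have hkerM : Module.finrank (ZMod p) (LinearMap.ker M) = f.natDegree := by omega
    rw [hset f, ncard_ker p n M, hkerM]
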